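/- For k = 3 and for k = 4, and any n ≥ 1: zcl_k(n) = k·n if and only if n is even and the binary expansion of n has no two consecutive digits equal to 1. -/

import Mathlib

open MvPolynomial Finset

open MvPolynomial Finset

/-! ### Auxiliary number-theoretic lemmas -/

lemma zcl_kummer_aux (N : ℕ) : ∀ a b : ℕ, a + b = N →
    ((a + b).choose a % 2 = 1 ↔ ∀ i, ¬(a.testBit i ∧ b.testBit i)) := by
  induction N using Nat.strong_induction_on with
  | _ N IH =>
    intro a b hab
    rcases Nat.eq_zero_or_pos N with hN | hN
    · subst hN
      have ha : a = 0 := by omega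
      have hb : b = 0 := by omega
      subst ha; subst hb
      simp [Nat.zero_testBit]
    · haveI : Fact (Nat.Prime 2) := ⟨Nat.prime_two⟩
      have lucas := Choose.choose_modEq_choose_mod_mul_choose_div_nat (n := a + b) (k := a) (p := 2)
      have hsplit : ∀ _ : ℕ, (∀ i, ¬(a.testBit i ∧ b.testBit i)) ↔
          (¬(a % 2 = 1 ∧ b % 2 = 1) ∧ ∀ i, ¬((a/2).testBit i ∧ (b/2).testBit i)) := by
        intro _
        constructor
        · intro h
          refine ⟨?_, fun i => ?_⟩
          · have := h 0
            simpa [Nat.testBit_zero] using this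
          · have := h (i + 1)
            simpa [Nat.testBit_add_one] using this
        · rintro ⟨h0, hs⟩ i
          cases i with
          | zero => simpa [Nat.testBit_zero] using h0
          | succ i => simpa [Nat.testBit_add_one] using hs i
      rcases Nat.mod_two_eq_zero_or_one a with ha | ha <;>
        rcases Nat.mod_two_eq_zero_or_one b with hb | hb
      pick_goal 4
      · have h1 : (a + b) % 2 = 0 := by omega
        have h2 : a % 2 = 1 := ha
        rw [Nat.ModEq] at lucas
        rw [lucas]
        have : (0 : ℕ).choose 1 = 0 := rfl
        rw [h1, h2, this]
        simp only [zero_mul, Nat.zero_mod]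
        constructor
        · omega
        · intro h
          exact absurd ⟨by simp [Nat.testBit_zero, ha], by simp [Nat.testBit_zero, hb]⟩ (h 0)
      all_goals {
        have hmod : (a + b) % 2 = a % 2 + b % 2 := by omega
        have hdiv : (a + b) / 2 = a / 2 + b / 2 := by omega
        have hone : ((a + b) % 2).choose (a % 2) = 1 := by
          rw [hmod, ha, hb]; rfl
        rw [Nat.ModEq] at lucas
        rw [lucas, hone, one_mul, hdiv, IH (a/2 + b/2) (by omega) _ _ rfl, hsplit 0]
        constructor
        · intro h
          exact ⟨by omega, h⟩
        · exact fun h => h.2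
      }

lemma zcl_kummer (a b : ℕ) :
    ((a + b).choose a % 2 = 1 ↔ ∀ i, ¬(a.testBit i ∧ b.testBit i)) :=
  zcl_kummer_aux (a + b) a b rfl

lemma zcl_carry3 (b1 b2 b3 n : ℕ) (hsum : b1 + b2 + b3 = n)
    (h1 : ∀ i, ¬(n.testBit i ∧ b1.testBit i))
    (h2 : ∀ i, ¬(n.testBit i ∧ b2.testBit i))
    (h3 : ∀ i, ¬(n.testBit i ∧ b3.testBit i)) :
    Even n ∧ ∀ j, ¬(n.testBit j ∧ n.testBit (j + 1)) := by
  set c : ℕ → ℕ := fun j => (b1 % 2 ^ j + b2 % 2 ^ j + b3 % 2 ^ j) / 2 ^ j with hc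
  have hpow : ∀ j : ℕ, 0 < 2 ^ j := fun j => Nat.pow_pos (by norm_num)
  have hcle : ∀ j, c j ≤ 2 := by
    intro j
    have e1 := Nat.mod_lt b1 (hpow j)
    have e2 := Nat.mod_lt b2 (hpow j)
    have e3 := Nat.mod_lt b3 (hpow j)
    have hlt : (b1 % 2 ^ j + b2 % 2 ^ j + b3 % 2 ^ j) < 3 * 2 ^ j := by omega
    have := (Nat.div_lt_iff_lt_mul (hpow j)).mpr hlt
    simp only [hc]
    omega
  have hS : ∀ j, b1 % 2 ^ j + b2 % 2 ^ j + b3 % 2 ^ j = 2 ^ j * c j + n % 2 ^ j := by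
    intro j
    have hmod : (b1 % 2 ^ j + b2 % 2 ^ j + b3 % 2 ^ j) % 2 ^ j = n % 2 ^ j := by
      conv_rhs => rw [← hsum, Nat.add_mod (b1 + b2) b3, Nat.add_mod b1 b2, Nat.mod_add_mod]
    conv_lhs => rw [← Nat.div_add_mod (b1 % 2 ^ j + b2 % 2 ^ j + b3 % 2 ^ j) (2 ^ j)]
    rw [hmod]
  have key : ∀ j, n.testBit j = true → c j = 1 + 2 * c (j + 1) := by
    intro j hj
    have tb : ∀ x : ℕ, x.testBit j = true ↔ x / 2 ^ j % 2 = 1 := by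
      intro x; simp [Nat.testBit_eq_decide_div_mod_eq]
    have hn' : n / 2 ^ j % 2 = 1 := (tb n).mp hj
    have hb1 : b1 / 2 ^ j % 2 = 0 := by
      have : ¬ (b1 / 2 ^ j % 2 = 1) := fun hx => h1 j ⟨hj, (tb b1).mpr hx⟩
      omega
    have hb2 : b2 / 2 ^ j % 2 = 0 := by
      have : ¬ (b2 / 2 ^ j % 2 = 1) := fun hx => h2 j ⟨hj, (tb b2).mpr hx⟩
      omega
    have hb3 : b3 / 2 ^ j % 2 = 0 := by
      have : ¬ (b3 / 2 ^ j % 2 = 1) := fun hx => h3 j ⟨hj, (tb b3).mpr hx⟩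
      omega
    have msucc : ∀ x : ℕ, x % 2 ^ (j + 1) = x % 2 ^ j + 2 ^ j * (x / 2 ^ j % 2) := by
      intro x; rw [pow_succ, Nat.mod_mul]
    have e1 : b1 % 2 ^ (j + 1) = b1 % 2 ^ j := by rw [msucc, hb1]; ring
    have e2 : b2 % 2 ^ (j + 1) = b2 % 2 ^ j := by rw [msucc, hb2]; ring
    have e3 : b3 % 2 ^ (j + 1) = b3 % 2 ^ j := by rw [msucc, hb3]; ring
    have en : n % 2 ^ (j + 1) = n % 2 ^ j + 2 ^ j := by rw [msucc, hn']; ring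
    have E1 := hS j
    have E2 := hS (j + 1)
    rw [e1, e2, e3, en, E1] at E2
    have hpj := hpow j
    have : 2 ^ j * c j = 2 ^ j * (1 + 2 * c (j + 1)) := by
      rw [pow_succ] at E2; ring_nf at E2 ⊢; omega
    exact Nat.eq_of_mul_eq_mul_left hpj this
  have hc0 : c 0 = 0 := by simp [hc, Nat.mod_one]
  constructor
  · rw [Nat.even_iff]
    by_contra h
    have : n.testBit 0 = true := by
      simp only [Nat.testBit_zero, decide_eq_true_eq]
      omega
    have := key 0 this
    omega
  · rintro j ⟨hj, hj1⟩
    have k1 := key j hj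
    have k2 := key (j + 1) hj1
    have := hcle j
    omega

/-! ### Auxiliary algebraic lemmas -/

lemma zcl_monomial_prod {σ R ι : Type*} [CommSemiring R] (s : Finset ι)
    (d : ι → (σ →₀ ℕ)) (r : ι → R) :
    ∏ i ∈ s, monomial (d i) (r i) = monomial (∑ i ∈ s, d i) (∏ i ∈ s, r i) := by
  classical
  induction s using Finset.induction with
  | empty => simp
  | insert _ _ h ih =>
    rw [Finset.prod_insert h, Finset.sum_insert h, Finset.prod_insert h, ih, monomial_mul]

lemma zcl_factor_eq (m : ℕ) (p q : Fin (m + 1)) (a : ℕ) :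
    ((X p + X q : MvPolynomial (Fin (m + 1)) (ZMod 2)) ^ a)
      = ∑ j ∈ Finset.range (a + 1),
          monomial (Finsupp.single p j + Finsupp.single q (a - j)) ((a.choose j : ZMod 2)) := by
  rw [add_pow]
  refine Finset.sum_congr rfl fun j hj => ?_
  rw [X_pow_eq_monomial, X_pow_eq_monomial, monomial_mul,
    ← map_natCast (C : ZMod 2 →+* MvPolynomial (Fin (m + 1)) (ZMod 2)) (a.choose j),
    C_apply, monomial_mul]
  simp

lemma zcl_prod_expand (m : ℕ) (a : Fin m → ℕ) :
    (∏ i : Fin m, (X i.castSucc + X (Fin.last m) : MvPolynomial (Fin (m + 1)) (ZMod 2)) ^ a i)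
      = ∑ c ∈ Fintype.piFinset (fun i => Finset.range (a i + 1)),
          monomial
            (∑ i, (Finsupp.single (Fin.castSucc i) (c i) + Finsupp.single (Fin.last m) (a i - c i)))
            (∏ i, ((a i).choose (c i) : ZMod 2)) := by
  simp_rw [zcl_factor_eq]
  rw [Finset.prod_univ_sum]
  exact Finset.sum_congr rfl fun c hc => zcl_monomial_prod _ _ _

lemma zcl_D_castSucc (m : ℕ) (a c : Fin m → ℕ) (j : Fin m) :
    (∑ i, (Finsupp.single (Fin.castSucc i) (c i) + Finsupp.single (Fin.last m) (a i - c i)))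
      j.castSucc = c j := by
  rw [Finsupp.finset_sum_apply]
  simp [Finsupp.add_apply, Finsupp.single_apply, Fin.castSucc_inj, (Fin.castSucc_lt_last j).ne']

lemma zcl_D_last (m : ℕ) (a c : Fin m → ℕ) :
    (∑ i, (Finsupp.single (Fin.castSucc i) (c i) + Finsupp.single (Fin.last m) (a i - c i)))
      (Fin.last m) = ∑ i, (a i - c i) := by
  rw [Finsupp.finset_sum_apply]
  simp [Finsupp.add_apply, Finsupp.single_apply, (Fin.castSucc_lt_last _).ne]

lemma zcl_tau_apply (m n : ℕ) (x : Fin (m + 1)) :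
    (Finsupp.equivFunOnFinite.symm (fun _ => n) : Fin (m + 1) →₀ ℕ) x = n := rfl

lemma zcl_D_eq_tau_iff (m n : ℕ) (a c : Fin m → ℕ) :
    (∑ i, (Finsupp.single (Fin.castSucc i) (c i) + Finsupp.single (Fin.last m) (a i - c i)))
        = (Finsupp.equivFunOnFinite.symm (fun _ => n) : Fin (m + 1) →₀ ℕ)
      ↔ (∀ j, c j = n) ∧ (∑ i, (a i - c i)) = n := by
  constructor
  · intro h
    constructor
    · intro j
      have := DFunLike.congr_fun h j.castSucc
      rwa [zcl_D_castSucc, zcl_tau_apply] at this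
    · have := DFunLike.congr_fun h (Fin.last m)
      rwa [zcl_D_last, zcl_tau_apply] at this
  · rintro ⟨h1, h2⟩
    ext x
    refine Fin.lastCases ?_ ?_ x
    · rw [zcl_D_last, zcl_tau_apply, h2]
    · intro j
      rw [zcl_D_castSucc, zcl_tau_apply, h1]

lemma zcl_coeff_prod_eq (m n : ℕ) (a : Fin m → ℕ) :
    coeff (Finsupp.equivFunOnFinite.symm fun _ => n)
      (∏ i : Fin m, (X i.castSucc + X (Fin.last m) : MvPolynomial (Fin (m + 1)) (ZMod 2)) ^ a i)
    = if (∀ i, n ≤ a i) ∧ (∑ i, (a i - n)) = n then ∏ i, ((a i).choose n : ZMod 2) else 0 := by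
  classical
  rw [zcl_prod_expand, coeff_sum]
  simp only [coeff_monomial]
  split_ifs with h
  · rw [Finset.sum_eq_single (fun _ : Fin m => n)]
    · rw [if_pos ((zcl_D_eq_tau_iff m n a _).mpr ⟨fun _ => rfl, h.2⟩)]
    · intro c hc hne
      rw [if_neg]
      intro hDc
      exact hne (funext fun j => ((zcl_D_eq_tau_iff m n a c).mp hDc).1 j)
    · intro hmem
      exact absurd (Fintype.mem_piFinset.mpr fun i =>
        Finset.mem_range.mpr (by have := h.1 i; omega)) hmem
  · refine Finset.sum_eq_zero fun c hc => ?_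
    rw [if_neg]
    intro hDc
    obtain ⟨h1, h2⟩ := (zcl_D_eq_tau_iff m n a c).mp hDc
    refine h ⟨fun i => ?_, ?_⟩
    · have hci : c i < a i + 1 := Finset.mem_range.mp (Fintype.mem_piFinset.mp hc i)
      have := h1 i
      omega
    · calc ∑ i, (a i - n) = ∑ i, (a i - c i) :=
            Finset.sum_congr rfl fun i _ => by rw [h1 i]
        _ = n := h2

lemma zcl_mem_span_iff (m n : ℕ) (x : MvPolynomial (Fin (m + 1)) (ZMod 2)) :
    x ∈ Ideal.span (Set.range fun i : Fin (m + 1) =>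
        (X i : MvPolynomial (Fin (m + 1)) (ZMod 2)) ^ (n + 1)) ↔
      ∀ d ∈ x.support, ∃ i, n + 1 ≤ d i := by
  have himg : (fun s => monomial s (1 : ZMod 2)) ''
      Set.range (fun i : Fin (m + 1) => Finsupp.single i (n + 1))
      = Set.range (fun i : Fin (m + 1) => (X i : MvPolynomial (Fin (m + 1)) (ZMod 2)) ^ (n + 1)) := by
    rw [← Set.range_comp]
    refine congrArg _ (funext fun i => ?_)
    simp [Function.comp, X_pow_eq_monomial]
  rw [← himg, mem_ideal_span_monomial_image]
  refine forall₂_congr fun d hd => ?_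
  constructor
  · rintro ⟨si, ⟨i, rfl⟩, hle⟩
    exact ⟨i, Finsupp.single_le_iff.mp hle⟩
  · rintro ⟨i, hi⟩
    exact ⟨Finsupp.single i (n + 1), ⟨i, rfl⟩, Finsupp.single_le_iff.mpr hi⟩

lemma zcl_prod_isHomogeneous (m : ℕ) (a : Fin m → ℕ) :
    (∏ i : Fin m, (X i.castSucc + X (Fin.last m) :
        MvPolynomial (Fin (m + 1)) (ZMod 2)) ^ a i).IsHomogeneous (∑ i, a i) := by
  have := MvPolynomial.IsHomogeneous.prod Finset.univ
    (fun i : Fin m => (X i.castSucc + X (Fin.last m) :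
      MvPolynomial (Fin (m + 1)) (ZMod 2)) ^ a i) (fun i => 1 * a i)
    (fun i _ => ((isHomogeneous_X _ _).add (isHomogeneous_X _ _)).pow (a i))
  simpa using this

lemma zcl_degree_eq_sum_univ {σ : Type*} [Fintype σ] (d : σ →₀ ℕ) :
    d.degree = ∑ i, d i :=
  Finset.sum_subset (Finset.subset_univ _) fun x _ hx => Finsupp.notMem_support_iff.mp hx

/-! ### Master lemma -/

lemma zcl_master (m n : ℕ) (hm : m = 2 ∨ m = 3) (hn : 1 ≤ n) :
    sSup {s : ℕ | ∃ a : Fin m → ℕ, s = ∑ i, a i ∧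
      Ideal.Quotient.mk
        (Ideal.span (Set.range fun i : Fin (m + 1) =>
          (X i : MvPolynomial (Fin (m + 1)) (ZMod 2)) ^ (n + 1)))
        (∏ i : Fin m, (X i.castSucc + X (Fin.last m)) ^ a i) ≠ 0}
      = (m + 1) * n ↔ Even n ∧ ∀ i, ¬(n.testBit i ∧ n.testBit (i + 1)) := by
  classical
  set S : Set ℕ := {s : ℕ | ∃ a : Fin m → ℕ, s = ∑ i, a i ∧
      Ideal.Quotient.mk
        (Ideal.span (Set.range fun i : Fin (m + 1) =>
          (X i : MvPolynomial (Fin (m + 1)) (ZMod 2)) ^ (n + 1)))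
        (∏ i : Fin m, (X i.castSucc + X (Fin.last m)) ^ a i) ≠ 0} with hSdef
  have hconst : ∑ _i : Fin (m + 1), n = (m + 1) * n := by
    simp [Finset.sum_const, Finset.card_univ, mul_comm]
  have hub : ∀ s ∈ S, s ≤ (m + 1) * n := by
    rintro s ⟨a, rfl, hne⟩
    by_contra hgt
    push_neg at hgt
    apply hne
    rw [Ideal.Quotient.eq_zero_iff_mem, zcl_mem_span_iff]
    intro d hd
    by_contra hno
    push_neg at hno
    have hdeg : d.degree = ∑ i, a i := by
      by_contra hne'
      exact (MvPolynomial.mem_support_iff.mp hd)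
        ((zcl_prod_isHomogeneous m a).coeff_eq_zero hne')
    have hle : ∑ i, d i ≤ ∑ _i : Fin (m + 1), n :=
      Finset.sum_le_sum fun i _ => by have := hno i; omega
    rw [zcl_degree_eq_sum_univ] at hdeg
    omega
  constructor
  · intro hsup
    have hmem : (m + 1) * n ∈ S := by
      have hne : S.Nonempty := by
        by_contra hempty
        rw [Set.not_nonempty_iff_eq_empty] at hempty
        rw [hempty] at hsup
        simp at hsup
        omega
      have := Nat.sSup_mem hne ⟨_, hub⟩
      rwa [hsup] at this
    obtain ⟨a, hsum, hne0⟩ := hmem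
    have hPnotmem : ¬ ∀ d ∈ (∏ i : Fin m, (X i.castSucc + X (Fin.last m) :
        MvPolynomial (Fin (m + 1)) (ZMod 2)) ^ a i).support, ∃ i, n + 1 ≤ d i :=
      fun hall => hne0 (Ideal.Quotient.eq_zero_iff_mem.mpr ((zcl_mem_span_iff m n _).mpr hall))
    push_neg at hPnotmem
    obtain ⟨d, hd, hdle⟩ := hPnotmem
    have hdeg : d.degree = ∑ i, a i := by
      by_contra hne'
      exact (MvPolynomial.mem_support_iff.mp hd)
        ((zcl_prod_isHomogeneous m a).coeff_eq_zero hne')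
    have hdtau : d = Finsupp.equivFunOnFinite.symm (fun _ => n) := by
      ext x
      rw [zcl_tau_apply]
      by_contra hx
      have hxlt : d x < n := by have := hdle x; omega
      have hlt : ∑ i, d i < ∑ _i : Fin (m + 1), n :=
        Finset.sum_lt_sum (fun i _ => by have := hdle i; omega)
          ⟨x, Finset.mem_univ x, hxlt⟩
      rw [zcl_degree_eq_sum_univ] at hdeg
      omega
    have hcoeff : coeff (Finsupp.equivFunOnFinite.symm fun _ => n)
        (∏ i : Fin m, (X i.castSucc + X (Fin.last m) :
          MvPolynomial (Fin (m + 1)) (ZMod 2)) ^ a i) ≠ 0 := by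
      rw [← hdtau]
      exact MvPolynomial.mem_support_iff.mp hd
    rw [zcl_coeff_prod_eq] at hcoeff
    by_cases hcond : (∀ i, n ≤ a i) ∧ (∑ i, (a i - n)) = n
    · rw [if_pos hcond] at hcoeff
      have hodd : ∀ i, ((a i).choose n) % 2 = 1 := by
        intro i
        have hne0' : ((a i).choose n : ZMod 2) ≠ 0 := by
          intro h0
          exact hcoeff (Finset.prod_eq_zero (Finset.mem_univ i) h0)
        rw [Ne, ZMod.natCast_eq_zero_iff] at hne0'
        omega
      have hdisj : ∀ i, ∀ t, ¬(n.testBit t ∧ (a i - n).testBit t) := by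
        intro i
        have hai : a i = n + (a i - n) := by have := hcond.1 i; omega
        have := hodd i
        rw [hai] at this
        exact (zcl_kummer n (a i - n)).mp this
      have hbsum0 : ∑ i, (a i - n) = n := hcond.2
      rcases hm with rfl | rfl
      · refine zcl_carry3 (a 0 - n) (a 1 - n) 0 n ?_ (hdisj 0) (hdisj 1) ?_
        · rw [Fin.sum_univ_two] at hbsum0; omega
        · intro i
          simp [Nat.zero_testBit]
      · refine zcl_carry3 (a 0 - n) (a 1 - n) (a 2 - n) n ?_ (hdisj 0) (hdisj 1) (hdisj 2)
        rw [Fin.sum_univ_three] at hbsum0; omega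
    · rw [if_neg hcond] at hcoeff
      exact absurd rfl hcoeff
  · rintro ⟨hev, hadj⟩
    have hn2 : n % 2 = 0 := Nat.even_iff.mp hev
    have hdisj : ∀ t, ¬(n.testBit t ∧ (n / 2).testBit t) := by
      rintro t ⟨ht1, ht2⟩
      rw [Nat.testBit_div_two] at ht2
      exact hadj t ⟨ht1, ht2⟩
    have hchoose : (n + n / 2).choose n % 2 = 1 := (zcl_kummer n (n / 2)).mpr hdisj
    set a : Fin m → ℕ := fun i => if i.val < 2 then n + n / 2 else n with ha
    have hasum : ∑ i, a i = (m + 1) * n := by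
      rcases hm with rfl | rfl
      · rw [Fin.sum_univ_two]
        simp only [ha]
        norm_num
        omega
      · rw [Fin.sum_univ_three]
        simp only [ha]
        norm_num
        omega
    have hcond : (∀ i, n ≤ a i) ∧ (∑ i, (a i - n)) = n := by
      refine ⟨fun i => ?_, ?_⟩
      · simp only [ha]
        split <;> omega
      · rcases hm with rfl | rfl
        · rw [Fin.sum_univ_two]
          simp only [ha]
          norm_num
          omega
        · rw [Fin.sum_univ_three]
          simp only [ha]
          norm_num
          omega
    have hmem : (m + 1) * n ∈ S := by
      refine ⟨a, hasum.symm, ?_⟩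
      rw [Ne, Ideal.Quotient.eq_zero_iff_mem, zcl_mem_span_iff]
      push_neg
      refine ⟨Finsupp.equivFunOnFinite.symm fun _ => n, ?_, fun i => by rw [zcl_tau_apply]; omega⟩
      rw [MvPolynomial.mem_support_iff, zcl_coeff_prod_eq, if_pos hcond]
      rw [Finset.prod_ne_zero_iff]
      intro i _
      rw [Ne, ZMod.natCast_eq_zero_iff]
      have hodd : (a i).choose n % 2 = 1 := by
        simp only [ha]
        split
        · exact hchoose
        · simp [Nat.choose_self]
      omega
    exact le_antisymm (csSup_le ⟨_, hmem⟩ hub) (le_csSup ⟨_, hub⟩ hmem)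

open MvPolynomial in
/-- `zcl k n` is the maximum of `a_1 + ... + a_(k-1)` over tuples of natural numbers
such that the product of the `(x_i + x_k)^(a_i)` is nonzero in
`(Z/2)[x_1, ..., x_k] / (x_1^(n+1), ..., x_k^(n+1))`. (For `k ≥ 1` the ring has
`(k-1)+1 = k` variables, the last one playing the role of `x_k`.) -/
noncomputable def zcl (k n : ℕ) : ℕ :=
  sSup {s : ℕ | ∃ a : Fin (k - 1) → ℕ, s = ∑ i, a i ∧
    Ideal.Quotient.mk
      (Ideal.span (Set.range fun i : Fin (k - 1 + 1) =>
        (X i : MvPolynomial (Fin (k - 1 + 1)) (ZMod 2)) ^ (n + 1)))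
      (∏ i : Fin (k - 1), (X i.castSucc + X (Fin.last (k - 1))) ^ a i) ≠ 0}

/-- For `k = 3` or `k = 4` and `n ≥ 1`: `zcl_k(n) = k*n` iff `n` is even and the binary
expansion of `n` has no two consecutive digits equal to 1. -/
theorem zcl_eq_iff_of_three_four (k n : ℕ) (hk : k = 3 ∨ k = 4) (hn : 1 ≤ n) :
    zcl k n = k * n ↔
      Even n ∧ ∀ i, ¬(n.testBit i ∧ n.testBit (i + 1)) := by
  rcases hk with rfl | rfl
  · exact zcl_master 2 n (Or.inl rfl) hn
  · exact zcl_master 3 n (Or.inr rfl) hn
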